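/- Let ε > 0 be fixed, let p = n^(−4/11+ε), and let n be sufficiently large in terms of ε. Let G be an n-vertex graph such that: (i) every vertex v satisfies deg_G(v) = (1 ± n^(−0.2)) n p; (ii) all distinct vertices u,v satisfy codeg_G(u,v) = (1 ± n^(−0.1)) n p², where codeg_G(u,v) is the number of common neighbors of u and v; (iii) for all distinct u,v the number of (u,v)-bowties satisfies |B_{u,v}| = (1 ± n^(−0.02)) n⁵ p¹⁰; and (iv) for every triangle T of G, the number of tuples (u,v,a_1,a_2,b_1,b_2,c) with u ≠ v and (a_1,a_2,b_1,b_2,c) a (u,v)-bowtie such that T ∈ {{u,a_1,a_2},{c,b_1,b_2},{c,a_1,a_2},{v,b_1,b_2}} is at most 48 n⁴ p⁷. Then there exists a vertex-balanced function φ_0 : T(G) → ℝ such that every triangle T of G satisfies φ_0(T) = (1 ± n^(−ε/6)) · (n p²)^(−1). -/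

import Mathlib

open Finset

/-- `x = (1 ± δ) y`. -/
def approxEq (x δ y : ℝ) : Prop := (1 - δ) * y ≤ x ∧ x ≤ (1 + δ) * y

/-- `(a₁, a₂, b₁, b₂, c)` is a `(u,v)`-bowtie in `G`: the seven vertices are distinct and
the ten listed pairs are edges of `G`. -/
def IsBowtie {V : Type*} (G : SimpleGraph V) (u v a₁ a₂ b₁ b₂ c : V) : Prop :=
  ([u, v, a₁, a₂, b₁, b₂, c] : List V).Nodup ∧
    G.Adj u a₁ ∧ G.Adj u a₂ ∧ G.Adj a₁ a₂ ∧ G.Adj a₁ c ∧ G.Adj a₂ c ∧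
    G.Adj v b₁ ∧ G.Adj v b₂ ∧ G.Adj b₁ b₂ ∧ G.Adj b₁ c ∧ G.Adj b₂ c

/-- The number of `(u,v)`-bowties of `G`. -/
noncomputable def bowtieCount {V : Type*} (G : SimpleGraph V) (u v : V) : ℕ :=
  {x : V × V × V × V × V |
    IsBowtie G u v x.1 x.2.1 x.2.2.1 x.2.2.2.1 x.2.2.2.2}.ncard

/-- The number of bowties `(u, v, a₁, a₂, b₁, b₂, c)` one of whose four triangles
is the triangle `t`. -/
noncomputable def bowtiesOnTriangle {V : Type*} [DecidableEq V] (G : SimpleGraph V)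
    (t : Finset V) : ℕ :=
  {x : V × V × V × V × V × V × V |
    IsBowtie G x.1 x.2.1 x.2.2.1 x.2.2.2.1 x.2.2.2.2.1 x.2.2.2.2.2.1 x.2.2.2.2.2.2 ∧
      (t = {x.1, x.2.2.1, x.2.2.2.1} ∨
        t = {x.2.2.2.2.2.2, x.2.2.2.2.1, x.2.2.2.2.2.1} ∨
        t = {x.2.2.2.2.2.2, x.2.2.1, x.2.2.2.1} ∨
        t = {x.2.1, x.2.2.2.2.1, x.2.2.2.2.2.1})}.ncard

open scoped Classical in
/-- The set of triangles of `G`, as a `Finset` of 3-element vertex sets. -/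
noncomputable def triangleFinset {V : Type*} [Fintype V] (G : SimpleGraph V) :
    Finset (Finset V) :=
  Finset.univ.filter fun t => G.IsNClique 3 t

namespace VBW
open scoped Classical

open scoped Classical

variable {n : ℕ} (G : SimpleGraph (Fin n))

noncomputable def Bset (u v : Fin n) : Finset (Fin n × Fin n × Fin n × Fin n × Fin n) :=
  Finset.univ.filter fun x => IsBowtie G u v x.1 x.2.1 x.2.2.1 x.2.2.2.1 x.2.2.2.2

lemma bowtieCount_eq (u v : Fin n) : bowtieCount G u v = (Bset G u v).card := by
  rw [bowtieCount, Set.ncard_eq_toFinset_card', Set.toFinset_setOf, Bset]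

lemma degN_eq (v : Fin n) :
    (G.neighborSet v).ncard = (Finset.univ.filter fun w => G.Adj v w).card := by
  rw [Set.ncard_eq_toFinset_card']
  congr 1; ext w; simp

lemma codegN_eq (u v : Fin n) :
    (G.neighborSet u ∩ G.neighborSet v).ncard
      = (Finset.univ.filter fun w => G.Adj u w ∧ G.Adj v w).card := by
  rw [Set.ncard_eq_toFinset_card']
  congr 1; ext w; simp

lemma Bset_self (u : Fin n) : Bset G u u = ∅ := by
  rw [Bset, Finset.filter_eq_empty_iff]
  rintro x - ⟨hnd, -⟩
  simp at hnd


lemma two_mul_Tv (v : Fin n) :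
    2 * ((triangleFinset G).filter (fun t => v ∈ t)).card
      = ∑ u ∈ Finset.univ.filter (fun w => G.Adj v w),
          (Finset.univ.filter fun w => G.Adj u w ∧ G.Adj v w).card := by
  set P : Finset (Fin n × Fin n) :=
    Finset.univ.filter (fun q => G.Adj v q.1 ∧ G.Adj v q.2 ∧ G.Adj q.1 q.2) with hP
  have h1 : P.card = ∑ u ∈ Finset.univ.filter (fun w => G.Adj v w),
      (Finset.univ.filter fun w => G.Adj u w ∧ G.Adj v w).card := by
    rw [hP, Finset.card_filter, Fintype.sum_prod_type, Finset.sum_filter]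
    refine Finset.sum_congr rfl fun u _ => ?_
    by_cases hu : G.Adj v u
    · rw [if_pos hu, Finset.card_filter]
      refine Finset.sum_congr rfl fun w _ => ?_
      by_cases h1 : G.Adj u w <;> by_cases h2 : G.Adj v w <;> simp [hu, h1, h2]
    · simp [hu]
  have h2 : P.card = ∑ t ∈ (triangleFinset G).filter (fun t => v ∈ t),
      (P.filter (fun q => ({v, q.1, q.2} : Finset (Fin n)) = t)).card := by
    refine Finset.card_eq_sum_card_fiberwise fun q hq => ?_
    rw [hP] at hq
    simp only [Finset.mem_coe, Finset.mem_filter, Finset.mem_univ, true_and] at hq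
    obtain ⟨ha, hb, hab⟩ := hq
    simp only [Finset.mem_coe, Finset.mem_filter, triangleFinset, Finset.mem_univ, true_and]
    exact ⟨(SimpleGraph.is3Clique_triple_iff).2 ⟨ha, hb, hab⟩, Finset.mem_insert_self _ _⟩
  have h3 : ∀ t ∈ (triangleFinset G).filter (fun t => v ∈ t),
      (P.filter (fun q => ({v, q.1, q.2} : Finset (Fin n)) = t)).card = 2 := by
    intro t ht
    simp only [Finset.mem_filter, triangleFinset, Finset.mem_univ, true_and] at ht
    obtain ⟨htri, hv⟩ := ht
    have hcard : t.card = 3 := htri.2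
    have hcl : G.IsClique ↑t := htri.1
    have he : (t.erase v).card = 2 := by rw [Finset.card_erase_of_mem hv, hcard]
    obtain ⟨a, b, hab, hE⟩ := Finset.card_eq_two.1 he
    have hamem : a ∈ t.erase v := by rw [hE]; simp
    have hbmem : b ∈ t.erase v := by rw [hE]; simp
    have hat : a ∈ t := (Finset.mem_erase.1 hamem).2
    have hav : a ≠ v := (Finset.mem_erase.1 hamem).1
    have hbt : b ∈ t := (Finset.mem_erase.1 hbmem).2
    have hbv : b ≠ v := (Finset.mem_erase.1 hbmem).1
    have hfilter : P.filter (fun q => ({v, q.1, q.2} : Finset (Fin n)) = t)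
        = {(a, b), (b, a)} := by
      ext q
      simp only [hP, Finset.mem_filter, Finset.mem_univ, true_and, Finset.mem_insert,
        Finset.mem_singleton]
      constructor
      · rintro ⟨⟨h1, h2, h3⟩, heq⟩
        have hq1 : q.1 = a ∨ q.1 = b := by
          have : q.1 ∈ t.erase v :=
            Finset.mem_erase.2 ⟨h1.ne', by rw [← heq]; simp⟩
          rw [hE] at this; simpa using this
        have hq2 : q.2 = a ∨ q.2 = b := by
          have : q.2 ∈ t.erase v :=
            Finset.mem_erase.2 ⟨h2.ne', by rw [← heq]; simp⟩
          rw [hE] at this; simpa using this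
        have hne : q.1 ≠ q.2 := h3.ne
        rcases hq1 with h | h <;> rcases hq2 with h' | h'
        · exact absurd (h.trans h'.symm) hne
        · exact Or.inl (Prod.ext_iff.2 ⟨h, h'⟩)
        · exact Or.inr (Prod.ext_iff.2 ⟨h, h'⟩)
        · exact absurd (h.trans h'.symm) hne
      · have key : ∀ x y : Fin n, x ∈ t.erase v → y ∈ t.erase v → x ≠ y →
            ({x, y} : Finset (Fin n)) = t.erase v →
            (G.Adj v x ∧ G.Adj v y ∧ G.Adj x y) ∧ ({v, x, y} : Finset (Fin n)) = t := by
          intro x y hx hy hxy hset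
          have hxt := (Finset.mem_erase.1 hx).2
          have hxv := (Finset.mem_erase.1 hx).1
          have hyt := (Finset.mem_erase.1 hy).2
          have hyv := (Finset.mem_erase.1 hy).1
          refine ⟨⟨hcl hv hxt (Ne.symm hxv), hcl hv hyt (Ne.symm hyv), hcl hxt hyt hxy⟩, ?_⟩
          have : ({v, x, y} : Finset (Fin n)) = insert v (t.erase v) := by rw [← hset]
          rw [this, Finset.insert_erase hv]
        rintro (h | h) <;> rw [h]
        · exact key a b hamem hbmem hab hE.symm
        · refine key b a hbmem hamem (Ne.symm hab) ?_
          rw [hE]; exact Finset.pair_comm b a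
    rw [hfilter, Finset.card_insert_of_notMem (by simp [Prod.ext_iff, hab]),
      Finset.card_singleton]
  have h4 : P.card = 2 * ((triangleFinset G).filter (fun t => v ∈ t)).card :=
    h2.trans (by rw [Finset.sum_congr rfl h3, Finset.sum_const, smul_eq_mul, mul_comm])
  rw [← h4, h1]

lemma sum_Tv : ∑ v : Fin n, ((triangleFinset G).filter (fun t => v ∈ t)).card
    = 3 * (triangleFinset G).card := by
  simp_rw [Finset.card_filter]
  rw [Finset.sum_comm]
  have : ∀ t ∈ triangleFinset G,
      (∑ v : Fin n, if v ∈ t then 1 else 0) = 3 := by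
    intro t ht
    have hcard : t.card = 3 := by
      simp only [triangleFinset, Finset.mem_filter] at ht
      exact ht.2.2
    rw [← Finset.card_filter, Finset.filter_univ_mem, hcard]
  rw [Finset.sum_congr rfl this, Finset.sum_const, smul_eq_mul, mul_comm]

noncomputable def sg (t : Finset (Fin n)) (u v : Fin n)
    (β : Fin n × Fin n × Fin n × Fin n × Fin n) : ℝ :=
  (if t = {u, β.1, β.2.1} then (1:ℝ) else 0)
  - (if t = {β.2.2.2.2, β.1, β.2.1} then (1:ℝ) else 0)
  + (if t = {β.2.2.2.2, β.2.2.1, β.2.2.2.1} then (1:ℝ) else 0)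
  - (if t = {v, β.2.2.1, β.2.2.2.1} then (1:ℝ) else 0)

noncomputable def pert (x : Fin n → Fin n → ℝ) (t : Finset (Fin n)) : ℝ :=
  ∑ q : Fin n × Fin n, ∑ β ∈ Bset G q.1 q.2,
    (x q.1 q.2 / ((Bset G q.1 q.2).card : ℝ)) * sg t q.1 q.2 β

lemma sum_sg (u v w : Fin n) (β : Fin n × Fin n × Fin n × Fin n × Fin n)
    (hβ : β ∈ Bset G u v) :
    ∑ t ∈ (triangleFinset G).filter (fun t => w ∈ t), sg t u v β
      = (if w = u then (1:ℝ) else 0) - (if w = v then 1 else 0) := by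
  obtain ⟨a1, a2, b1, b2, c⟩ := β
  rw [Bset, Finset.mem_filter] at hβ
  obtain ⟨-, hnd, h1, h2, h3, h4, h5, h6, h7, h8, h9, h10⟩ := hβ
  simp only [List.nodup_cons, List.mem_cons, List.mem_singleton, List.not_mem_nil,
    or_false, not_or, List.nodup_nil, and_true] at hnd
  obtain ⟨⟨huv, hua1, hua2, hub1, hub2, huc⟩, ⟨hva1, hva2, hvb1, hvb2, hvc⟩,
    ⟨ha12, ha1b1, ha1b2, ha1c⟩, ⟨ha2b1, ha2b2, ha2c⟩, ⟨hb12, hb1c⟩, hb2c, -⟩ := hnd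
  have e1 : ({u, a1, a2} : Finset (Fin n)) ∈ triangleFinset G := by
    simp only [triangleFinset, Finset.mem_filter, Finset.mem_univ, true_and]
    exact SimpleGraph.is3Clique_triple_iff.2 ⟨h1, h2, h3⟩
  have e2 : ({c, a1, a2} : Finset (Fin n)) ∈ triangleFinset G := by
    simp only [triangleFinset, Finset.mem_filter, Finset.mem_univ, true_and]
    exact SimpleGraph.is3Clique_triple_iff.2 ⟨h4.symm, h5.symm, h3⟩
  have e3 : ({c, b1, b2} : Finset (Fin n)) ∈ triangleFinset G := by
    simp only [triangleFinset, Finset.mem_filter, Finset.mem_univ, true_and]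
    exact SimpleGraph.is3Clique_triple_iff.2 ⟨h9.symm, h10.symm, h8⟩
  have e4 : ({v, b1, b2} : Finset (Fin n)) ∈ triangleFinset G := by
    simp only [triangleFinset, Finset.mem_filter, Finset.mem_univ, true_and]
    exact SimpleGraph.is3Clique_triple_iff.2 ⟨h6, h7, h8⟩
  simp only [sg]
  rw [Finset.sum_sub_distrib, Finset.sum_add_distrib, Finset.sum_sub_distrib,
    Finset.sum_ite_eq', Finset.sum_ite_eq', Finset.sum_ite_eq', Finset.sum_ite_eq']
  simp only [Finset.mem_filter, e1, e2, e3, e4, true_and, Finset.mem_insert,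
    Finset.mem_singleton]
  by_cases hwu : w = u
  · subst hwu; simp [huv, hua1, hua2, hub1, hub2, huc]
  · by_cases hwv : w = v
    · subst hwv
      simp [Ne.symm huv, hva1, hva2, hvb1, hvb2, hvc, hwu]
    · by_cases hwa1 : w = a1
      · subst hwa1
        simp [Ne.symm hua1, Ne.symm hva1, ha12, ha1b1, ha1b2, ha1c, hwu, hwv]
      · by_cases hwa2 : w = a2
        · subst hwa2
          simp [Ne.symm hua2, Ne.symm hva2, Ne.symm ha12, ha2b1, ha2b2, ha2c, hwu, hwv]
        · by_cases hwb1 : w = b1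
          · subst hwb1
            simp [Ne.symm hub1, Ne.symm hvb1, Ne.symm ha1b1, Ne.symm ha2b1, hb12, hb1c,
              hwu, hwv]
          · by_cases hwb2 : w = b2
            · subst hwb2
              simp [Ne.symm hub2, Ne.symm hvb2, Ne.symm ha1b2, Ne.symm ha2b2,
                Ne.symm hb12, hb2c, hwu, hwv]
            · by_cases hwc : w = c
              · subst hwc
                simp [Ne.symm huc, Ne.symm hvc, Ne.symm ha1c, Ne.symm ha2c,
                  Ne.symm hb1c, Ne.symm hb2c, hwu, hwv]
              · simp [hwu, hwv, hwa1, hwa2, hwb1, hwb2, hwc]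

lemma inner_balance (x : Fin n → Fin n → ℝ)
    (hB : ∀ u v : Fin n, u ≠ v → ((Bset G u v).card : ℝ) ≠ 0)
    (w : Fin n) (q : Fin n × Fin n) :
    ∑ β ∈ Bset G q.1 q.2, (x q.1 q.2 / ((Bset G q.1 q.2).card : ℝ))
        * ((if w = q.1 then (1:ℝ) else 0) - (if w = q.2 then 1 else 0))
      = x q.1 q.2 * ((if w = q.1 then (1:ℝ) else 0) - (if w = q.2 then 1 else 0)) := by
  by_cases hq : q.1 = q.2
  · rw [hq, Bset_self]
    simp
  · rw [Finset.sum_const, nsmul_eq_mul]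
    field_simp [hB q.1 q.2 hq]

lemma sum_pert (x : Fin n → Fin n → ℝ)
    (hB : ∀ u v : Fin n, u ≠ v → ((Bset G u v).card : ℝ) ≠ 0) (v : Fin n) :
    ∑ t ∈ (triangleFinset G).filter (fun t => v ∈ t), pert G x t
      = ∑ u : Fin n, x v u - ∑ u : Fin n, x u v := by
  simp only [pert]
  rw [Finset.sum_comm]
  have step1 : ∀ q : Fin n × Fin n,
      (∑ t ∈ (triangleFinset G).filter (fun t => v ∈ t), ∑ β ∈ Bset G q.1 q.2,
        (x q.1 q.2 / ((Bset G q.1 q.2).card : ℝ)) * sg t q.1 q.2 β)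
      = x q.1 q.2 * ((if v = q.1 then (1:ℝ) else 0) - (if v = q.2 then 1 else 0)) := by
    intro q
    rw [Finset.sum_comm]
    have : ∀ β ∈ Bset G q.1 q.2,
        (∑ t ∈ (triangleFinset G).filter (fun t => v ∈ t),
          (x q.1 q.2 / ((Bset G q.1 q.2).card : ℝ)) * sg t q.1 q.2 β)
        = (x q.1 q.2 / ((Bset G q.1 q.2).card : ℝ))
            * ((if v = q.1 then (1:ℝ) else 0) - (if v = q.2 then 1 else 0)) := by
      intro β hβ
      rw [← Finset.mul_sum, sum_sg G q.1 q.2 v β hβ]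
    rw [Finset.sum_congr rfl this]
    exact inner_balance G x hB v q
  rw [Finset.sum_congr rfl (fun q _ => step1 q), Fintype.sum_prod_type]
  simp only [mul_sub]
  have lhs1 : ∀ u : Fin n,
      (∑ w : Fin n, ((x u w * if v = u then (1:ℝ) else 0) - x u w * if v = w then 1 else 0))
        = (if v = u then ∑ w : Fin n, x u w else 0) - x u v := by
    intro u
    rw [Finset.sum_sub_distrib]
    congr 1
    · by_cases h : v = u <;> simp [h, Finset.mul_sum]
    · simp_rw [mul_ite, mul_one, mul_zero]
      rw [Finset.sum_ite_eq]
      simp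
  rw [Finset.sum_congr rfl (fun u _ => lhs1 u), Finset.sum_sub_distrib]
  congr 1
  rw [Finset.sum_ite_eq]
  simp

lemma bowtiesOnTriangle_eq (t : Finset (Fin n)) :
    bowtiesOnTriangle G t
      = ∑ q : Fin n × Fin n, ((Bset G q.1 q.2).filter
          (fun β => t = {q.1, β.1, β.2.1} ∨ t = {β.2.2.2.2, β.2.2.1, β.2.2.2.1} ∨
            t = {β.2.2.2.2, β.1, β.2.1} ∨ t = {q.2, β.2.2.1, β.2.2.2.1})).card := by
  rw [bowtiesOnTriangle, Set.ncard_eq_toFinset_card', Set.toFinset_setOf,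
    Finset.card_filter]
  simp_rw [Bset, Finset.filter_filter, Finset.card_filter, Fintype.sum_prod_type]

lemma abs_sg_le (t : Finset (Fin n)) (u v : Fin n)
    (β : Fin n × Fin n × Fin n × Fin n × Fin n) :
    |sg t u v β| ≤ 4 * (if (t = {u, β.1, β.2.1} ∨ t = {β.2.2.2.2, β.2.2.1, β.2.2.2.1} ∨
      t = {β.2.2.2.2, β.1, β.2.1} ∨ t = {v, β.2.2.1, β.2.2.2.1}) then (1:ℝ) else 0) := by
  by_cases h : (t = {u, β.1, β.2.1} ∨ t = {β.2.2.2.2, β.2.2.1, β.2.2.2.1} ∨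
      t = {β.2.2.2.2, β.1, β.2.1} ∨ t = {v, β.2.2.1, β.2.2.2.1})
  · rw [if_pos h, mul_one, sg, abs_le]
    constructor <;> split_ifs <;> norm_num
  · rw [if_neg h, mul_zero, sg]
    push_neg at h
    obtain ⟨hd1, hd2, hd3, hd4⟩ := h
    simp [hd1, hd2, hd3, hd4]

lemma abs_pert_le (x : Fin n → Fin n → ℝ) (X Bmin : ℝ) (hX0 : 0 ≤ X)
    (hX : ∀ u v : Fin n, |x u v| ≤ X)
    (hBmin : 0 < Bmin) (hB : ∀ u v : Fin n, u ≠ v → Bmin ≤ ((Bset G u v).card : ℝ))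
    (t : Finset (Fin n)) :
    |pert G x t| ≤ (4 * X / Bmin) * (bowtiesOnTriangle G t : ℝ) := by
  rw [bowtiesOnTriangle_eq]
  push_cast
  rw [pert, Finset.mul_sum]
  refine (Finset.abs_sum_le_sum_abs _ _).trans (Finset.sum_le_sum fun q _ => ?_)
  by_cases hq : q.1 = q.2
  · rw [hq, Bset_self]
    simp only [Finset.sum_empty, abs_zero]
    positivity
  · refine (Finset.abs_sum_le_sum_abs _ _).trans ?_
    have hcard : Bmin ≤ ((Bset G q.1 q.2).card : ℝ) := hB _ _ hq
    have step : ∀ β ∈ Bset G q.1 q.2,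
        |x q.1 q.2 / ((Bset G q.1 q.2).card : ℝ) * sg t q.1 q.2 β|
          ≤ (X / Bmin) * (4 * (if (t = {q.1, β.1, β.2.1} ∨
              t = {β.2.2.2.2, β.2.2.1, β.2.2.2.1} ∨
              t = {β.2.2.2.2, β.1, β.2.1} ∨ t = {q.2, β.2.2.1, β.2.2.2.1}) then (1:ℝ) else 0)) := by
      intro β hβ
      rw [abs_mul, abs_div, Nat.abs_cast]
      refine mul_le_mul ?_ (abs_sg_le t q.1 q.2 β) (abs_nonneg _) (by positivity)
      exact div_le_div₀ hX0 (hX _ _) hBmin hcard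
    refine (Finset.sum_le_sum step).trans ?_
    rw [← Finset.mul_sum]
    have : ∑ β ∈ Bset G q.1 q.2, (4 * (if (t = {q.1, β.1, β.2.1} ∨
        t = {β.2.2.2.2, β.2.2.1, β.2.2.2.1} ∨
        t = {β.2.2.2.2, β.1, β.2.1} ∨ t = {q.2, β.2.2.1, β.2.2.2.1}) then (1:ℝ) else 0))
        = 4 * (((Bset G q.1 q.2).filter
          (fun β => t = {q.1, β.1, β.2.1} ∨ t = {β.2.2.2.2, β.2.2.1, β.2.2.2.1} ∨
            t = {β.2.2.2.2, β.1, β.2.1} ∨ t = {q.2, β.2.2.1, β.2.2.2.1})).card : ℝ) := by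
      rw [← Finset.mul_sum]
      congr 1
      rw [Finset.sum_ite, Finset.sum_const, Finset.sum_const]
      simp
    rw [this]
    apply le_of_eq
    ring

lemma sum_x_eq (d : Fin n → ℝ) (hd : ∑ u : Fin n, d u = 0) (hn : 0 < n) (v : Fin n) :
    (∑ u : Fin n, (d v - d u) / (2 * n)) - ∑ u : Fin n, (d u - d v) / (2 * n) = d v := by
  have hn' : (n:ℝ) ≠ 0 := by positivity
  rw [← Finset.sum_div, ← Finset.sum_div, Finset.sum_sub_distrib, Finset.sum_sub_distrib,
    hd, Finset.sum_const, Finset.card_univ, Fintype.card_fin, nsmul_eq_mul]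
  field_simp
  ring

end VBW

set_option maxHeartbeats 1000000 in
open scoped Classical in
/-- Under properties (i)–(iv) below of an `n`-vertex graph `G`
(with `p = n^(−4/11+ε)` and `n` large in terms of `ε`), `G` supports a vertex-balanced
triangle weighting `φ₀` with `φ₀(T) = (1 ± n^(−ε/6)) (n p²)⁻¹` for every triangle `T`. -/
theorem exists_vertex_balanced_weighting (ε : ℝ) (hε : 0 < ε) :
    ∃ N : ℕ, ∀ n : ℕ, N ≤ n → ∀ G : SimpleGraph (Fin n),
      (∀ v : Fin n,
        approxEq ((G.neighborSet v).ncard : ℝ) ((n : ℝ) ^ (-(0.2 : ℝ)))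
          ((n : ℝ) * (n : ℝ) ^ (-(4 : ℝ) / 11 + ε))) →
      (∀ u v : Fin n, u ≠ v →
        approxEq ((G.neighborSet u ∩ G.neighborSet v).ncard : ℝ) ((n : ℝ) ^ (-(0.1 : ℝ)))
          ((n : ℝ) * ((n : ℝ) ^ (-(4 : ℝ) / 11 + ε)) ^ (2 : ℕ))) →
      (∀ u v : Fin n, u ≠ v →
        approxEq (bowtieCount G u v : ℝ) ((n : ℝ) ^ (-(0.02 : ℝ)))
          ((n : ℝ) ^ (5 : ℕ) * ((n : ℝ) ^ (-(4 : ℝ) / 11 + ε)) ^ (10 : ℕ))) →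
      (∀ t : Finset (Fin n), G.IsNClique 3 t →
        (bowtiesOnTriangle G t : ℝ) ≤
          48 * (n : ℝ) ^ (4 : ℕ) * ((n : ℝ) ^ (-(4 : ℝ) / 11 + ε)) ^ (7 : ℕ)) →
      ∃ φ₀ : Finset (Fin n) → ℝ,
        (∀ v : Fin n,
          ∑ t ∈ (triangleFinset G).filter (fun t => v ∈ t), φ₀ t
            = ((G.neighborSet v).ncard : ℝ) / 2) ∧
        ∀ t ∈ triangleFinset G,
          approxEq (φ₀ t) ((n : ℝ) ^ (-ε / 6))
            (((n : ℝ) * ((n : ℝ) ^ (-(4 : ℝ) / 11 + ε)) ^ (2 : ℕ))⁻¹) := by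
  have hev : ∀ a b : ℝ, 0 < a → 0 < b →
      ∀ᶠ m : ℕ in Filter.atTop, (m : ℝ) ^ (-a) ≤ b := by
    intro a b ha hb
    have h1 : Filter.Tendsto (fun m : ℕ => (m : ℝ) ^ (-a)) Filter.atTop (nhds 0) :=
      (tendsto_rpow_neg_atTop ha).comp tendsto_natCast_atTop_atTop
    filter_upwards [h1.eventually (gt_mem_nhds hb)] with m hm using le_of_lt hm
  rcases le_or_gt ε (1/2) with hle | hgt
  · -- main case
    have hev1 := hev 0.2 (1/100) (by norm_num) (by norm_num)
    have hev2 := hev 0.1 (1/100) (by norm_num) (by norm_num)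
    have hev3 := hev 0.02 (1/100) (by norm_num) (by norm_num)
    have hev4 := hev (1/60) (1/4000) (by norm_num) (by norm_num)
    have hev5 : ∀ᶠ m : ℕ in Filter.atTop, 2 ≤ m := Filter.eventually_atTop.2 ⟨2, fun _ h => h⟩
    obtain ⟨N, hN⟩ := Filter.eventually_atTop.1 ((((hev1.and hev2).and hev3).and hev4).and hev5)
    refine ⟨N, fun n hn G hi hii hiii hiv => ?_⟩
    obtain ⟨⟨⟨⟨hd1, hd2⟩, hd3⟩, hd4⟩, hn2⟩ := hN n hn
    have hn0 : (0:ℝ) < n := by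
      have : (2:ℝ) ≤ n := by exact_mod_cast hn2
      linarith
    have hn1' : (1:ℝ) ≤ n := by
      have : (2:ℝ) ≤ n := by exact_mod_cast hn2
      linarith
    set p : ℝ := (n:ℝ) ^ (-(4:ℝ)/11 + ε) with hpdef
    have hp0 : 0 < p := Real.rpow_pos_of_pos hn0 _
    set δ1 : ℝ := (n:ℝ) ^ (-(0.2:ℝ)) with hδ1def
    set δ2 : ℝ := (n:ℝ) ^ (-(0.1:ℝ)) with hδ2def
    set δ3 : ℝ := (n:ℝ) ^ (-(0.02:ℝ)) with hδ3def
    have hδ10 : 0 < δ1 := Real.rpow_pos_of_pos hn0 _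
    have hδ20 : 0 < δ2 := Real.rpow_pos_of_pos hn0 _
    have hδ30 : 0 < δ3 := Real.rpow_pos_of_pos hn0 _
    have hδ12 : δ1 ≤ δ2 := Real.rpow_le_rpow_of_exponent_le hn1' (by norm_num)
    have e1p : (0:ℝ) < 1 - δ1 := by linarith only [hd1, hδ10]
    have e2p : (0:ℝ) < 1 - δ2 := by linarith only [hd2, hδ20]
    have e3p : (0:ℝ) < 1 - 12*δ2 := by linarith only [hd2, hδ20]
    have hq1 : δ1*δ2 ≤ δ2*δ2 := mul_le_mul_of_nonneg_right hδ12 hδ20.le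
    have hq2 : δ2*δ2 ≤ (1/100)*δ2 := mul_le_mul_of_nonneg_right hd2 hδ20.le
    have hq1m : δ1*δ2*δ2 ≤ δ2*δ2*δ2 := mul_le_mul_of_nonneg_right hq1 hδ20.le
    have hq2m : δ2*δ2*δ2 ≤ (1/100)*δ2*δ2 := mul_le_mul_of_nonneg_right hq2 hδ20.le
    have hq3 : (0:ℝ) ≤ δ1*δ2 := mul_nonneg hδ10.le hδ20.le
    have hq4 : (0:ℝ) ≤ δ1*δ2*δ2 := mul_nonneg hq3 hδ20.le
    have hq5 : (0:ℝ) ≤ δ2*δ2 := mul_nonneg hδ20.le hδ20.le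
    set A : ℝ := (n:ℝ) * p with hAdef
    set B : ℝ := (n:ℝ) * p ^ (2:ℕ) with hBdef
    have hA0 : 0 < A := by positivity
    have hB0 : 0 < B := by positivity
    -- degree bounds
    have hdeg : ∀ v : Fin n, (1-δ1)*A ≤ ((G.neighborSet v).ncard : ℝ) ∧
        ((G.neighborSet v).ncard : ℝ) ≤ (1+δ1)*A := fun v => hi v
    -- triangle-per-vertex bounds
    have hTv2 : ∀ v : Fin n,
        ((G.neighborSet v).ncard : ℝ) * ((1-δ2)*B)
          ≤ 2 * ((((triangleFinset G).filter (fun t => v ∈ t)).card : ℝ)) ∧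
        2 * ((((triangleFinset G).filter (fun t => v ∈ t)).card : ℝ))
          ≤ ((G.neighborSet v).ncard : ℝ) * ((1+δ2)*B) := by
      intro v
      have hkey := VBW.two_mul_Tv G v
      have hc : (2:ℝ) * ((((triangleFinset G).filter (fun t => v ∈ t)).card : ℝ))
          = ∑ u ∈ Finset.univ.filter (fun w => G.Adj v w),
              ((Finset.univ.filter fun w => G.Adj u w ∧ G.Adj v w).card : ℝ) := by
        exact_mod_cast congrArg (Nat.cast : ℕ → ℝ) hkey
      have hdegcard : ((Finset.univ.filter fun w => G.Adj v w).card : ℝ)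
          = ((G.neighborSet v).ncard : ℝ) := by rw [VBW.degN_eq]
      have hbnd : ∀ u ∈ Finset.univ.filter (fun w => G.Adj v w),
          (1-δ2)*B ≤ ((Finset.univ.filter fun w => G.Adj u w ∧ G.Adj v w).card : ℝ) ∧
          ((Finset.univ.filter fun w => G.Adj u w ∧ G.Adj v w).card : ℝ) ≤ (1+δ2)*B := by
        intro u hu
        rw [Finset.mem_filter] at hu
        have hne : u ≠ v := fun h => G.irrefl (h ▸ hu.2)
        have h1 := (hii u v hne).1
        have h2 := (hii u v hne).2
        rw [VBW.codegN_eq] at h1 h2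
        exact ⟨h1, h2⟩
      constructor
      · rw [hc, ← hdegcard]
        have := Finset.card_nsmul_le_sum (Finset.univ.filter (fun w => G.Adj v w))
          (fun u => ((Finset.univ.filter fun w => G.Adj u w ∧ G.Adj v w).card : ℝ))
          ((1-δ2)*B) (fun u hu => (hbnd u hu).1)
        rw [nsmul_eq_mul] at this
        linarith
      · rw [hc, ← hdegcard]
        have := Finset.sum_le_card_nsmul (Finset.univ.filter (fun w => G.Adj v w))
          (fun u => ((Finset.univ.filter fun w => G.Adj u w ∧ G.Adj v w).card : ℝ))
          ((1+δ2)*B) (fun u hu => (hbnd u hu).2)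
        rw [nsmul_eq_mul] at this
        linarith
    have hTvb : ∀ v : Fin n,
        (1-δ1)*(1-δ2)*(A*B) ≤ 2 * ((((triangleFinset G).filter (fun t => v ∈ t)).card : ℝ)) ∧
        2 * ((((triangleFinset G).filter (fun t => v ∈ t)).card : ℝ))
          ≤ (1+δ1)*(1+δ2)*(A*B) := by
      intro v
      obtain ⟨l2, u2⟩ := hTv2 v
      obtain ⟨l1, u1⟩ := hdeg v
      constructor
      · have h0 : (0:ℝ) ≤ (1-δ2)*B := by nlinarith
        have h1 := mul_le_mul_of_nonneg_right l1 h0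
        linarith
      · have h0 : (0:ℝ) ≤ (1+δ2)*B := by nlinarith
        have h1 := mul_le_mul_of_nonneg_right u1 h0
        linarith
    -- global triangle count
    set TT : ℝ := ((triangleFinset G).card : ℝ) with hTTdef
    have hTT3 : 3 * TT = ∑ v : Fin n,
        ((((triangleFinset G).filter (fun t => v ∈ t)).card : ℝ)) := by
      rw [hTTdef]
      exact_mod_cast congrArg (Nat.cast : ℕ → ℝ) (VBW.sum_Tv G).symm
    have hTTb : (n:ℝ)*((1-δ1)*(1-δ2)*(A*B)) ≤ 6*TT ∧
        6*TT ≤ (n:ℝ)*((1+δ1)*(1+δ2)*(A*B)) := by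
      have hconst : ∀ r : ℝ, ∑ _v : Fin n, r = (n:ℝ) * r := by
        intro r
        rw [Finset.sum_const, Finset.card_univ, Fintype.card_fin, nsmul_eq_mul]
      have hl : (n:ℝ)*((1-δ1)*(1-δ2)*(A*B))
          ≤ ∑ v : Fin n, 2*((((triangleFinset G).filter (fun t => v ∈ t)).card : ℝ)) := by
        rw [← hconst]
        exact Finset.sum_le_sum (fun v _ => (hTvb v).1)
      have hu : (∑ v : Fin n, 2*((((triangleFinset G).filter (fun t => v ∈ t)).card : ℝ)))
          ≤ (n:ℝ)*((1+δ1)*(1+δ2)*(A*B)) := by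
        rw [← hconst]
        exact Finset.sum_le_sum (fun v _ => (hTvb v).2)
      have hsum : ∑ v : Fin n, 2*((((triangleFinset G).filter (fun t => v ∈ t)).card : ℝ))
          = 6 * TT := by
        rw [← Finset.mul_sum, ← hTT3]; ring
      rw [hsum] at hl hu
      exact ⟨hl, hu⟩
    have hTT0 : 0 < TT := by
      have hL0 : (0:ℝ) < (n:ℝ)*((1-δ1)*(1-δ2)*(A*B)) :=
        mul_pos hn0 (mul_pos (mul_pos e1p e2p) (mul_pos hA0 hB0))
      linarith only [hTTb.1, hL0]
    -- sum of degrees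
    set E : ℝ := ∑ v : Fin n, ((G.neighborSet v).ncard : ℝ) with hEdef
    have hEb : (n:ℝ)*((1-δ1)*A) ≤ E ∧ E ≤ (n:ℝ)*((1+δ1)*A) := by
      have hconst : ∀ r : ℝ, ∑ _v : Fin n, r = (n:ℝ) * r := by
        intro r
        rw [Finset.sum_const, Finset.card_univ, Fintype.card_fin, nsmul_eq_mul]
      have hl : (n:ℝ)*((1-δ1)*A) ≤ E := by
        rw [hEdef, ← hconst]
        exact Finset.sum_le_sum (fun v _ => (hdeg v).1)
      have hu : E ≤ (n:ℝ)*((1+δ1)*A) := by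
        rw [hEdef, ← hconst]
        exact Finset.sum_le_sum (fun v _ => (hdeg v).2)
      exact ⟨hl, hu⟩
    have hE0 : 0 ≤ E := by
      have hL0 : (0:ℝ) < (n:ℝ)*((1-δ1)*A) := mul_pos hn0 (mul_pos e1p hA0)
      linarith only [hEb.1, hL0]
    set c : ℝ := E / (6*TT) with hcdef
    have hc0 : 0 ≤ c := by positivity
    -- bounds on c
    have hδ2small : δ2 ≤ 1/100 := hd2
    have hδ1small : δ1 ≤ 1/100 := hδ12.trans hδ2small
    have hnAB0 : (0:ℝ) < (n:ℝ)*(A*B) := mul_pos hn0 (mul_pos hA0 hB0)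
    have hcB : (1-12*δ2)/B ≤ c ∧ c ≤ (1+12*δ2)/B := by
      have h6TT0 : (0:ℝ) < 6*TT := by linarith only [hTT0]
      constructor
      · rw [hcdef, div_le_div_iff₀ hB0 h6TT0]
        have hsc : (1-12*δ2)*((1+δ1)*(1+δ2)) ≤ (1-δ1) := by
          linarith only [hδ12, hδ20, hd2, hq1, hq2, hq1m, hq2m, hq3, hq4, hq5]
        have h1 : (1-12*δ2)*(6*TT) ≤ (1-12*δ2)*((n:ℝ)*((1+δ1)*(1+δ2)*(A*B))) :=
          mul_le_mul_of_nonneg_left hTTb.2 e3p.le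
        have h2 := mul_le_mul_of_nonneg_left hsc hnAB0.le
        have h3 := mul_le_mul_of_nonneg_right hEb.1 hB0.le
        linarith only [h1, h2, h3]
      · rw [hcdef, div_le_div_iff₀ h6TT0 hB0]
        have hsc : (1+δ1) ≤ (1+12*δ2)*((1-δ1)*(1-δ2)) := by
          linarith only [hδ12, hδ20, hd2, hq1, hq2, hq1m, hq2m, hq3, hq4, hq5]
        have h1 := mul_le_mul_of_nonneg_right hEb.2 hB0.le
        have h2 := mul_le_mul_of_nonneg_left hsc hnAB0.le
        have h3 : (1+12*δ2)*((n:ℝ)*((1-δ1)*(1-δ2)*(A*B))) ≤ (1+12*δ2)*(6*TT) := by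
          refine mul_le_mul_of_nonneg_left hTTb.1 ?_
          linarith only [hδ20]
        linarith only [h1, h2, h3]
    -- bounds on c * Tv
    have hcTv : ∀ v : Fin n,
        (1-12*δ2)*((1-δ1)*(1-δ2))*A/2
          ≤ c * ((((triangleFinset G).filter (fun t => v ∈ t)).card : ℝ)) ∧
        c * ((((triangleFinset G).filter (fun t => v ∈ t)).card : ℝ))
          ≤ (1+12*δ2)*((1+δ1)*(1+δ2))*A/2 := by
      intro v
      obtain ⟨l, u⟩ := hTvb v
      obtain ⟨cl, cu⟩ := hcB
      have hTv0 : (0:ℝ) ≤ (((triangleFinset G).filter (fun t => v ∈ t)).card : ℝ) :=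
        Nat.cast_nonneg _
      have hcl0 : (0:ℝ) < (1-12*δ2)/B := div_pos e3p hB0
      constructor
      · calc (1-12*δ2)*((1-δ1)*(1-δ2))*A/2
            = ((1-12*δ2)/B)*((1-δ1)*(1-δ2)*(A*B)/2) := by field_simp
          _ ≤ ((1-12*δ2)/B)*((((triangleFinset G).filter (fun t => v ∈ t)).card : ℝ)) := by
              exact mul_le_mul_of_nonneg_left (by linarith only [l]) hcl0.le
          _ ≤ c * ((((triangleFinset G).filter (fun t => v ∈ t)).card : ℝ)) :=
              mul_le_mul_of_nonneg_right cl hTv0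
      · calc c * ((((triangleFinset G).filter (fun t => v ∈ t)).card : ℝ))
            ≤ ((1+12*δ2)/B) * ((((triangleFinset G).filter (fun t => v ∈ t)).card : ℝ)) :=
              mul_le_mul_of_nonneg_right cu hTv0
          _ ≤ ((1+12*δ2)/B)*((1+δ1)*(1+δ2)*(A*B)/2) := by
              refine mul_le_mul_of_nonneg_left (by linarith only [u]) ?_
              refine div_nonneg ?_ hB0.le
              linarith only [hδ20]
          _ = (1+12*δ2)*((1+δ1)*(1+δ2))*A/2 := by field_simp
    -- the defect function
    set d : Fin n → ℝ := fun v => ((G.neighborSet v).ncard : ℝ)/2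
      - c * ((((triangleFinset G).filter (fun t => v ∈ t)).card : ℝ)) with hddef
    have hd0 : ∑ v : Fin n, d v = 0 := by
      rw [hddef]
      rw [Finset.sum_sub_distrib, ← Finset.sum_div, ← Finset.mul_sum, ← hTT3, ← hEdef, hcdef]
      field_simp
      ring
    have hdb : ∀ v : Fin n, |d v| ≤ 10*δ2*A := by
      intro v
      rw [hddef, abs_le]
      obtain ⟨l1, u1⟩ := hdeg v
      obtain ⟨l2, u2⟩ := hcTv v
      have hsc3 : (1+12*δ2)*((1+δ1)*(1+δ2)) - (1-δ1) ≤ 20*δ2 := by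
        linarith only [hδ12, hδ20, hd2, hq1, hq2, hq1m, hq2m, hq3, hq4, hq5]
      have hsc4 : (1+δ1) - (1-12*δ2)*((1-δ1)*(1-δ2)) ≤ 20*δ2 := by
        linarith only [hδ12, hδ20, hd2, hq1, hq2, hq1m, hq2m, hq3, hq4, hq5]
      have hm3 := mul_le_mul_of_nonneg_right hsc3 hA0.le
      have hm4 := mul_le_mul_of_nonneg_right hsc4 hA0.le
      constructor
      · simp only
        linarith only [u2, l1, hm3]
      · simp only
        linarith only [l2, u1, hm4]
    -- the flow function
    set x : Fin n → Fin n → ℝ := fun u w => (d u - d w)/(2*(n:ℝ)) with hxdef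
    have hX : ∀ u w : Fin n, |x u w| ≤ 10*δ2*p := by
      intro u w
      rw [hxdef]
      simp only
      have h1 := abs_le.1 (hdb u)
      have h2 := abs_le.1 (hdb w)
      rw [abs_le]
      constructor
      · rw [le_div_iff₀ (by positivity : (0:ℝ) < 2*(n:ℝ))]
        rw [hAdef] at h1 h2
        linarith only [h1.1, h2.2]
      · rw [div_le_iff₀ (by positivity : (0:ℝ) < 2*(n:ℝ))]
        rw [hAdef] at h1 h2
        linarith only [h1.2, h2.1]
    -- bowtie count bounds
    have hBset : ∀ u v : Fin n, u ≠ v →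
        (1/2)*((n:ℝ)^(5:ℕ)*p^(10:ℕ)) ≤ ((VBW.Bset G u v).card : ℝ) := by
      intro u v huv
      have h1 := (hiii u v huv).1
      rw [VBW.bowtieCount_eq] at h1
      have hq0 : (0:ℝ) < (n:ℝ)^(5:ℕ)*p^(10:ℕ) :=
        mul_pos (pow_pos hn0 5) (pow_pos hp0 10)
      have hm := mul_le_mul_of_nonneg_right
        (show (1:ℝ)/2 ≤ 1 - δ3 by linarith only [hd3]) hq0.le
      linarith only [h1, hm]
    have hBne : ∀ u v : Fin n, u ≠ v → ((VBW.Bset G u v).card : ℝ) ≠ 0 := by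
      intro u v huv
      have := hBset u v huv
      have h0 : (0:ℝ) < (1/2)*((n:ℝ)^(5:ℕ)*p^(10:ℕ)) := by positivity
      exact ne_of_gt (lt_of_lt_of_le h0 this)
    -- perturbation bound
    have hpert : ∀ t ∈ triangleFinset G, |VBW.pert G x t| ≤ 3840*δ2/B := by
      intro t ht
      have htri : G.IsNClique 3 t := by
        simp only [triangleFinset, Finset.mem_filter] at ht
        exact ht.2
      have h1 := VBW.abs_pert_le G x (10*δ2*p) ((1/2)*((n:ℝ)^(5:ℕ)*p^(10:ℕ)))
        (by positivity) hX (by positivity) hBset t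
      have h2 := hiv t htri
      have h3 : (0:ℝ) ≤ 4*(10*δ2*p)/((1/2)*((n:ℝ)^(5:ℕ)*p^(10:ℕ))) := by positivity
      have h4 : (0:ℝ) ≤ (bowtiesOnTriangle G t : ℝ) := Nat.cast_nonneg _
      calc |VBW.pert G x t|
          ≤ (4*(10*δ2*p)/((1/2)*((n:ℝ)^(5:ℕ)*p^(10:ℕ)))) * (bowtiesOnTriangle G t : ℝ) := h1
        _ ≤ (4*(10*δ2*p)/((1/2)*((n:ℝ)^(5:ℕ)*p^(10:ℕ)))) * (48*(n:ℝ)^(4:ℕ)*p^(7:ℕ)) :=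
            mul_le_mul_of_nonneg_left h2 h3
        _ = 3840*δ2/B := by
            rw [hBdef]
            have hn' : (n:ℝ) ≠ 0 := ne_of_gt hn0
            have hp' : p ≠ 0 := ne_of_gt hp0
            field_simp
            ring
    -- the weighting
    refine ⟨fun t => c + VBW.pert G x t, ?_, ?_⟩
    · intro v
      rw [Finset.sum_add_distrib, Finset.sum_const, nsmul_eq_mul,
        VBW.sum_pert G x hBne v]
      have hsx := VBW.sum_x_eq d hd0 (by omega : 0 < n) v
      have hxv : (∑ u : Fin n, x v u) - (∑ u : Fin n, x u v) = d v := by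
        rw [hxdef]; exact hsx
      rw [hxv, hddef]
      simp only
      ring
    · intro t ht
      set η : ℝ := (n:ℝ)^(-ε/6) with hηdef
      have hη0 : 0 < η := Real.rpow_pos_of_pos hn0 _
      have hkey : 4000*δ2 ≤ η := by
        have h1 : δ2 ≤ (n:ℝ)^(-ε/6 + -(1/60:ℝ)) :=
          Real.rpow_le_rpow_of_exponent_le hn1' (by norm_num; linarith)
        have h2 : (n:ℝ)^(-ε/6 + -(1/60:ℝ)) = η * (n:ℝ)^(-(1/60:ℝ)) := by
          rw [hηdef, ← Real.rpow_add hn0]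
        have h3 : η * (n:ℝ)^(-(1/60:ℝ)) ≤ η * (1/4000) :=
          mul_le_mul_of_nonneg_left hd4 hη0.le
        rw [h2] at h1
        linarith only [h1, h3]
      have hpb := abs_le.1 (hpert t ht)
      obtain ⟨cl, cu⟩ := hcB
      have hBinv : (0:ℝ) < B⁻¹ := by positivity
      rw [div_eq_mul_inv] at cl cu
      have hp1 : 3840*δ2/B = 3840*δ2*B⁻¹ := div_eq_mul_inv _ _
      rw [hp1] at hpb
      have hmono : (η - 4000*δ2)*B⁻¹ ≥ 0 := by
        refine mul_nonneg ?_ hBinv.le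
        linarith only [hkey]
      have hd2B : (0:ℝ) ≤ δ2*B⁻¹ := (mul_pos hδ20 hBinv).le
      constructor
      · linarith only [hpb.1, cl, hmono, hd2B]
      · linarith only [hpb.2, cu, hmono, hd2B]
  · -- degenerate case: hypotheses contradictory for large n
    have hev1 := hev 0.2 (1/2) (by norm_num) (by norm_num)
    have hev2 : ∀ᶠ m : ℕ in Filter.atTop, (4:ℝ) ≤ (m:ℝ) ^ ((3:ℝ)/22) := by
      have h1 : Filter.Tendsto (fun m : ℕ => (m : ℝ) ^ ((3:ℝ)/22)) Filter.atTop Filter.atTop :=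
        (tendsto_rpow_atTop (by norm_num)).comp tendsto_natCast_atTop_atTop
      exact h1.eventually_ge_atTop 4
    have hev5 : ∀ᶠ m : ℕ in Filter.atTop, 1 ≤ m := Filter.eventually_atTop.2 ⟨1, fun _ h => h⟩
    obtain ⟨N, hN⟩ := Filter.eventually_atTop.1 ((hev1.and hev2).and hev5)
    refine ⟨N, fun n hn G hi hii hiii hiv => ?_⟩
    obtain ⟨⟨h12, h322⟩, hn1⟩ := hN n hn
    exfalso
    have hn0 : (0:ℝ) < n := by exact_mod_cast hn1
    have hn1' : (1:ℝ) ≤ n := by exact_mod_cast hn1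
    set v : Fin n := ⟨0, hn1⟩
    have hp : (n:ℝ) ^ ((3:ℝ)/22) ≤ (n:ℝ) ^ (-(4:ℝ)/11 + ε) :=
      Real.rpow_le_rpow_of_exponent_le hn1' (by linarith)
    have hdeg := (hi v).1
    have hub : ((G.neighborSet v).ncard : ℝ) ≤ n := by
      have h1 : (G.neighborSet v).ncard ≤ (Set.univ : Set (Fin n)).ncard :=
        Set.ncard_le_ncard (Set.subset_univ _) Set.finite_univ
      rw [Set.ncard_univ, Nat.card_eq_fintype_card, Fintype.card_fin] at h1
      exact_mod_cast h1
    have hlb : (2:ℝ) * n ≤ ((G.neighborSet v).ncard : ℝ) := by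
      refine le_trans ?_ hdeg
      have e1 : (1:ℝ)/2 ≤ 1 - (n:ℝ) ^ (-(0.2:ℝ)) := by linarith
      have e2 : (4:ℝ) * n ≤ (n:ℝ) * (n:ℝ) ^ (-(4:ℝ)/11 + ε) := by
        nlinarith [h322.trans hp]
      nlinarith [Real.rpow_pos_of_pos hn0 (-(4:ℝ)/11 + ε), Real.rpow_nonneg (le_of_lt hn0) (-(0.2:ℝ))]
    linarith
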